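/- Let k ≥ 3 and n ≥ k, let 𝓔 be a family of subsets of [n], and let S = {χ_{[n]\E} : E ∈ 𝓔} ⊆ {0,1}^n be the set of characteristic vectors of the complements of the hyperedges. Then there exists a hitting set X ⊆ [n] of size k (i.e., |X| = k and X ∩ E ≠ ∅ for every E ∈ 𝓔) if and only if the all-ones vector 𝟙 does not belong to Cl_{Th_k^{k+1}}(S). -/

import Mathlib

/-- A finitary operation on `D`: an arity `t` together with a function `D^t → D`. -/
abbrev Op (D : Type*) := Σ t : ℕ, (Fin t → D) → D

/-- The closure of a set `S` of vectors under the coordinatewise application of the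
operations in `F`. -/
inductive Cl {D ι : Type*} (F : Set (Op D)) (S : Set (ι → D)) : (ι → D) → Prop
  | base {v : ι → D} : v ∈ S → Cl F S v
  | app {t : ℕ} {f : (Fin t → D) → D} (hf : (⟨t, f⟩ : Op D) ∈ F)
      (vs : Fin t → ι → D) (hvs : ∀ j, Cl F S (vs j)) :
      Cl F S (fun i => f fun j => vs j i)

private lemma build_lemma {k n : ℕ} (hk : 1 ≤ k) (E : Set (Finset (Fin n)))
    (hX : ∀ X : Finset (Fin n), X.card = k → ∃ e ∈ E, X ∩ e = ∅) :
    ∀ m (Y : Finset (Fin n)), Y.card = k + m →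
      ∃ v, Cl {(⟨k + 1, fun x => decide (k ≤ (Finset.univ.filter fun i => x i = true).card)⟩ :
              Op Bool)}
          {v | ∃ e ∈ E, v = fun i => decide (i ∉ e)} v ∧ ∀ i ∈ Y, v i = true := by
  intro m
  induction m with
  | zero =>
      intro Y hY
      obtain ⟨e, heE, hdisj⟩ := hX Y (by simpa using hY)
      refine ⟨fun i => decide (i ∉ e), Cl.base ⟨e, heE, rfl⟩, ?_⟩
      intro i hi
      have hie : i ∉ e := by
        intro hie
        have : i ∈ Y ∩ e := Finset.mem_inter.mpr ⟨hi, hie⟩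
        rw [hdisj] at this
        exact absurd this (Finset.notMem_empty i)
      simp [hie]
  | succ m ih =>
      intro Y hY
      have h1 : k + 1 ≤ Y.card := by omega
      obtain ⟨Z, hZY, hZcard⟩ := Finset.exists_subset_card_eq (s := Y) (n := k + 1) h1
      set g : Fin (k + 1) ≃o Z := Z.orderIsoOfFin hZcard with hg
      have ginj : Function.Injective (fun j => ((g j : Z) : Fin n)) := by
        intro a b hab
        exact g.injective (Subtype.ext hab)
      have hcard : ∀ j : Fin (k + 1), (Y.erase ((g j : Z) : Fin n)).card = k + m := by
        intro j
        rw [Finset.card_erase_of_mem (hZY (g j).2), hY]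
        omega
      choose v hv1 hv2 using fun j => ih (Y.erase ((g j : Z) : Fin n)) (hcard j)
      have happ := Cl.app (D := Bool) (ι := Fin n)
        (F := {(⟨k + 1, fun x =>
          decide (k ≤ (Finset.univ.filter fun i => x i = true).card)⟩ : Op Bool)})
        (S := {v | ∃ e ∈ E, v = fun i => decide (i ∉ e)})
        (t := k + 1)
        (f := fun x => decide (k ≤ (Finset.univ.filter fun i => x i = true).card))
        rfl v hv1
      refine ⟨_, happ, ?_⟩
      intro i hi
      have hTc : (Finset.univ.filter fun j : Fin (k + 1) => ¬ v j i = true) ⊆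
          (Finset.univ.filter fun j : Fin (k + 1) => ((g j : Z) : Fin n) = i) := by
        intro j hj
        rw [Finset.mem_filter] at hj ⊢
        refine ⟨Finset.mem_univ _, ?_⟩
        by_contra hne
        exact hj.2 (hv2 j i (Finset.mem_erase.mpr ⟨fun h => hne h.symm, hi⟩))
      have hTc1 : (Finset.univ.filter fun j : Fin (k + 1) => ((g j : Z) : Fin n) = i).card ≤ 1 := by
        apply Finset.card_le_one.mpr
        intro a ha b hb
        rw [Finset.mem_filter] at ha hb
        exact ginj (ha.2.trans hb.2.symm)
      have hsum := Finset.card_filter_add_card_filter_not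
        (s := (Finset.univ : Finset (Fin (k + 1)))) (p := fun j => v j i = true)
      have hT : k ≤ (Finset.univ.filter fun j : Fin (k + 1) => v j i = true).card := by
        have := Finset.card_le_card hTc
        simp only [Finset.card_univ, Fintype.card_fin] at hsum
        omega
      simp only [decide_eq_true_eq]
      exact hT

theorem hitting_set_iff_not_closure_threshold {k n : ℕ} (hk : 3 ≤ k) (hn : k ≤ n)
    (E : Set (Finset (Fin n))) :
    (∃ X : Finset (Fin n), X.card = k ∧ ∀ e ∈ E, (X ∩ e).Nonempty) ↔
      ¬ Cl {(⟨k + 1, fun x => decide (k ≤ (Finset.univ.filter fun i => x i = true).card)⟩ :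
              Op Bool)}
          {v | ∃ e ∈ E, v = fun i => decide (i ∉ e)} (fun _ => true) := by
  constructor
  · rintro ⟨X, hXcard, hXhit⟩ hCl
    have inv : ∀ v, Cl {(⟨k + 1, fun x =>
          decide (k ≤ (Finset.univ.filter fun i => x i = true).card)⟩ : Op Bool)}
        {v | ∃ e ∈ E, v = fun i => decide (i ∉ e)} v → ∃ i ∈ X, v i = false := by
      intro v hv
      induction hv with
      | base hv =>
          obtain ⟨e, heE, rfl⟩ := hv
          obtain ⟨i, hi⟩ := hXhit e heE
          rw [Finset.mem_inter] at hi
          exact ⟨i, hi.1, by simp [hi.2]⟩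
      | @app t f' hmem vs hvs ih =>
          rw [Set.mem_singleton_iff] at hmem
          obtain ⟨ht, hfe⟩ := Sigma.mk.inj_iff.mp hmem
          subst ht
          have hfe' : f' = fun x => decide (k ≤ (Finset.univ.filter fun i => x i = true).card) :=
            eq_of_heq hfe
          subst hfe'
          choose c hc1 hc2 using ih
          obtain ⟨j1, _, j2, _, hne, heq⟩ :=
            Finset.exists_ne_map_eq_of_card_lt_of_maps_to
              (s := (Finset.univ : Finset (Fin (k + 1)))) (t := X)
              (by simp [hXcard]) (fun j _ => hc1 j)
          refine ⟨c j1, hc1 j1, ?_⟩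
          have hsub : (Finset.univ.filter fun j : Fin (k + 1) => vs j (c j1) = true) ⊆
              Finset.univ \ {j1, j2} := by
            intro j hj
            rw [Finset.mem_filter] at hj
            rw [Finset.mem_sdiff, Finset.mem_insert, Finset.mem_singleton]
            refine ⟨Finset.mem_univ _, ?_⟩
            rintro (rfl | rfl)
            · rw [hc2 j] at hj; exact absurd hj.2 (by simp)
            · rw [heq, hc2 j] at hj; exact absurd hj.2 (by simp)
          have hle := Finset.card_le_card hsub
          have hcard2 : (Finset.univ \ ({j1, j2} : Finset (Fin (k + 1)))).card = k - 1 := by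
            rw [Finset.card_sdiff_of_subset (by simp)]
            rw [Finset.card_insert_of_notMem (by simpa using hne), Finset.card_singleton]
            simp
          rw [hcard2] at hle
          simp only [decide_eq_false_iff_not]
          omega
    obtain ⟨i, _, hfalse⟩ := inv _ hCl
    simp at hfalse
  · intro hncl
    by_contra hX
    push_neg at hX
    apply hncl
    have hX' : ∀ X : Finset (Fin n), X.card = k → ∃ e ∈ E, X ∩ e = ∅ := by
      intro X hXc
      obtain ⟨e, heE, hne⟩ := hX X hXc
      exact ⟨e, heE, hne⟩
    obtain ⟨v, hv1, hv2⟩ := build_lemma (by omega) E hX' (n - k) Finset.univ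
      (by simp; omega)
    have : v = fun _ => true := funext fun i => hv2 i (Finset.mem_univ i)
    rwa [this] at hv1
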